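/- Let (F, ξ) : C → D be a monoidal functor between pivotal monoidal categories that preserves the pivotal structures. Then (1) for all objects V, W of C, E_{F(V),F(W)}(ξ⁻¹ ∘ F(f)) = ξ⁻¹ ∘ F(E_{V,W}(f)) for every f : I → V ⊗ W; and (2) for every object V and every n ≥ 1, E_{F(V)}^(n)(ξ^(n) ∘ F(g)) = ξ^(n) ∘ F(E_V^(n)(g)) for every g : I → V^⊗n, where ξ^(n) : F(V^⊗n) → F(V)^⊗n is the unique coherence isomorphism built from instances of ξ⁻¹. -/

import Mathlib

open CategoryTheory MonoidalCategory Functor.LaxMonoidal Functor.OplaxMonoidal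

namespace FSI

variable {C : Type*} [Category C] [MonoidalCategory C] [RightRigidCategory C]
variable {D : Type*} [Category D] [MonoidalCategory D] [RightRigidCategory D]

/-- The adjunction isomorphism `A : C(I, V ⊗ W) → C(V^∨, W)`,
`A(f) = (ev_V ⊗ W) ∘ Φ⁻¹ ∘ (V^∨ ⊗ f)`. -/
def Amap (V W : C) (f : 𝟙_ C ⟶ V ⊗ W) : Vᘁ ⟶ W :=
  (ρ_ (Vᘁ)).inv ≫ (Vᘁ ◁ f) ≫ (α_ (Vᘁ) V W).inv ≫ (ε_ V (Vᘁ) ▷ W) ≫ (λ_ W).hom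

/-- The inverse of the adjunction isomorphism `A`, `A⁻¹(g) = (V ⊗ g) ∘ db_V`. -/
def Ainv (V W : C) (g : Vᘁ ⟶ W) : 𝟙_ C ⟶ V ⊗ W :=
  η_ V (Vᘁ) ≫ (V ◁ g)

/-- `B : C(V, W) → C(I, W ⊗ V^∨)`, `B(f) = (f ⊗ V^∨) ∘ db_V`. -/
def Bmap (V W : C) (f : V ⟶ W) : 𝟙_ C ⟶ W ⊗ (Vᘁ) :=
  η_ V (Vᘁ) ≫ (f ▷ (Vᘁ))

/-- `T_{V,W} : C(V^∨, W) → C(W^∨, V)`, `T(g) = j_V⁻¹ ∘ g^∨`, defined relative to a chosen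
isomorphism `j_V : V ≅ V^∨∨` (a component of a pivotal structure). -/
def Tmap {V W : C} (jV : V ≅ (Vᘁ)ᘁ) (g : Vᘁ ⟶ W) : Wᘁ ⟶ V :=
  gᘁ ≫ jV.inv

/-- `E_{V,W} = A⁻¹ ∘ T_{V,W} ∘ A : C(I, V ⊗ W) → C(I, W ⊗ V)`. -/
def Emap {V : C} (W : C) (jV : V ≅ (Vᘁ)ᘁ) (f : 𝟙_ C ⟶ V ⊗ W) : 𝟙_ C ⟶ W ⊗ V :=
  Ainv W V (Tmap jV (Amap V W f))

/-- The `n`-fold tensor power with rightmost parenthesization: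
`V^⊗0 = I`, `V^⊗(n+1) = V ⊗ V^⊗n`. -/
def pow (V : C) : ℕ → C
  | 0 => 𝟙_ C
  | n + 1 => V ⊗ pow V n

/-- The coherence isomorphism `Φ^(n+1) : V^⊗n ⊗ V ⟶ V^⊗(n+1)` built from associators
(and unitors). -/
def PhiN (V : C) : ∀ n : ℕ, pow V n ⊗ V ⟶ pow V (n + 1)
  | 0 => (λ_ V).hom ≫ (ρ_ V).inv
  | n + 1 => (α_ V (pow V n) V).hom ≫ (V ◁ PhiN V n)

/-- `E_V^(n+1) = C(I, Φ^(n+1)) ∘ E_{V, V^⊗n} : C(I, V^⊗(n+1)) → C(I, V^⊗(n+1))`.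
Here `jj` is the family of components of a pivotal structure. -/
def EN (jj : ∀ X : C, X ≅ (Xᘁ)ᘁ) (V : C) (n : ℕ)
    (f : 𝟙_ C ⟶ pow V (n + 1)) : 𝟙_ C ⟶ pow V (n + 1) :=
  Emap (pow V n) (jj V) f ≫ PhiN V n

/-- The canonical evaluation exhibiting `Y^∨ ⊗ X^∨` as a dual of `X ⊗ Y`. -/
def tildeEv (X Y : C) : ((Yᘁ) ⊗ (Xᘁ)) ⊗ (X ⊗ Y) ⟶ 𝟙_ C :=
  (α_ (Yᘁ) (Xᘁ) (X ⊗ Y)).hom ≫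
    ((Yᘁ) ◁ ((α_ (Xᘁ) X Y).inv ≫ (ε_ X (Xᘁ) ▷ Y) ≫ (λ_ Y).hom)) ≫ ε_ Y (Yᘁ)

/-- The canonical isomorphism `ζ : Y^∨ ⊗ X^∨ ⟶ (X ⊗ Y)^∨` making the duality functor
monoidal; it is the unique morphism with `ev_{X⊗Y} ∘ (ζ ⊗ (X⊗Y)) = tildeEv`. -/
def zeta (X Y : C) : (Yᘁ) ⊗ (Xᘁ) ⟶ (X ⊗ Y)ᘁ :=
  (ρ_ ((Yᘁ) ⊗ (Xᘁ))).inv ≫ (((Yᘁ) ⊗ (Xᘁ)) ◁ η_ (X ⊗ Y) ((X ⊗ Y)ᘁ)) ≫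
    (α_ ((Yᘁ) ⊗ (Xᘁ)) (X ⊗ Y) ((X ⊗ Y)ᘁ)).inv ≫
      (tildeEv X Y ▷ ((X ⊗ Y)ᘁ)) ≫ (λ_ ((X ⊗ Y)ᘁ)).hom

/-- A pivotal structure on a rigid monoidal category: a monoidal natural isomorphism
`j : Id → (−)^∨∨`. -/
structure Pivotal (C : Type*) [Category C] [MonoidalCategory C] [RightRigidCategory C] where
  j : ∀ X : C, X ≅ (Xᘁ)ᘁ
  naturality : ∀ {X Y : C} (f : X ⟶ Y), f ≫ (j Y).hom = (j X).hom ≫ (fᘁ)ᘁ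
  monoidality : ∀ X Y : C,
    ((j X).hom ⊗ₘ (j Y).hom) ≫ zeta (Yᘁ) (Xᘁ) = (j (X ⊗ Y)).hom ≫ (zeta X Y)ᘁ

/-- The categorical trace `ctr(a) = ev_{V^∨} ∘ (a ⊗ V^∨) ∘ db_V ∈ End(I)` of a morphism
`a : V ⟶ V^∨∨`. -/
def ctr {V : C} (a : V ⟶ (Vᘁ)ᘁ) : 𝟙_ C ⟶ 𝟙_ C :=
  η_ V (Vᘁ) ≫ (a ▷ (Vᘁ)) ≫ ε_ (Vᘁ) ((Vᘁ)ᘁ)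

/-- The left pivotal trace `ptr_l(f) = ev_V ∘ (V^∨ ⊗ (f ∘ j_V⁻¹)) ∘ db_{V^∨}`. -/
def ptrl (jj : ∀ X : C, X ≅ (Xᘁ)ᘁ) {V : C} (f : V ⟶ V) : 𝟙_ C ⟶ 𝟙_ C :=
  η_ (Vᘁ) ((Vᘁ)ᘁ) ≫ ((Vᘁ) ◁ ((jj V).inv ≫ f)) ≫ ε_ V (Vᘁ)

/-- The right pivotal trace `ptr_r(f) = ev_{V^∨} ∘ ((j_V ∘ f) ⊗ V^∨) ∘ db_V`. -/
def ptrr (jj : ∀ X : C, X ≅ (Xᘁ)ᘁ) {V : C} (f : V ⟶ V) : 𝟙_ C ⟶ 𝟙_ C :=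
  η_ V (Vᘁ) ≫ ((f ≫ (jj V).hom) ▷ (Vᘁ)) ≫ ε_ (Vᘁ) ((Vᘁ)ᘁ)

/-- A pivotal category is *spherical* if left and right pivotal traces agree. -/
def Spherical (jj : ∀ X : C, X ≅ (Xᘁ)ᘁ) : Prop :=
  ∀ (V : C) (f : V ⟶ V), ptrl jj f = ptrr jj f

section MonoidalFunctorDefs

variable (F : C ⥤ D) [F.Monoidal]

/-- The evaluation making `F(X^∨)` a dual of `F(X)`:
`ev' = F(ev_X) ∘ ξ` (composed with the unit comparison `F(I) ≅ I`). -/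
def evF (X : C) : F.obj (Xᘁ) ⊗ F.obj X ⟶ 𝟙_ D :=
  μ F (Xᘁ) X ≫ F.map (ε_ X (Xᘁ)) ≫ η F

/-- The coevaluation making `F(X^∨)` a dual of `F(X)`: `db' = ξ⁻¹ ∘ F(db_X)`. -/
def dbF (X : C) : 𝟙_ D ⟶ F.obj X ⊗ F.obj (Xᘁ) :=
  ε F ≫ F.map (η_ X (Xᘁ)) ≫ δ F X (Xᘁ)

/-- The duality transformation `ξ̃ : F(X^∨) ⟶ F(X)^∨` of a monoidal functor between rigid
monoidal categories: the unique (iso)morphism with `ev_{F(X)} ∘ (ξ̃ ⊗ F(X)) = F(ev_X) ∘ ξ`. -/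
def xiT (X : C) : F.obj (Xᘁ) ⟶ (F.obj X)ᘁ :=
  (ρ_ (F.obj (Xᘁ))).inv ≫ (F.obj (Xᘁ) ◁ η_ (F.obj X) ((F.obj X)ᘁ)) ≫
    (α_ (F.obj (Xᘁ)) (F.obj X) ((F.obj X)ᘁ)).inv ≫
      (evF F X ▷ ((F.obj X)ᘁ)) ≫ (λ_ ((F.obj X)ᘁ)).hom

/-- The inverse `ξ̃⁻¹ : F(X)^∨ ⟶ F(X^∨)` of the duality transformation `ξ̃`. -/
def xiTinv (X : C) : (F.obj X)ᘁ ⟶ F.obj (Xᘁ) :=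
  (ρ_ ((F.obj X)ᘁ)).inv ≫ ((F.obj X)ᘁ ◁ dbF F X) ≫
    (α_ ((F.obj X)ᘁ) (F.obj X) (F.obj (Xᘁ))).inv ≫
      (ε_ (F.obj X) ((F.obj X)ᘁ) ▷ F.obj (Xᘁ)) ≫ (λ_ (F.obj (Xᘁ))).hom

/-- A monoidal functor between pivotal monoidal categories *preserves the pivotal
structures* if `ξ̃_{X^∨} ∘ F(j_X) = (ξ̃_X)^∨ ∘ j_{F(X)}` for all `X`. -/
def PreservesPivotal (P : Pivotal C) (Q : Pivotal D) : Prop :=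
  ∀ X : C, F.map (P.j X).hom ≫ xiT F (Xᘁ) = (Q.j (F.obj X)).hom ≫ (xiT F X)ᘁ

/-- The coherence isomorphism `ξ^(n) : F(V^⊗n) ⟶ F(V)^⊗n` built from instances of `ξ⁻¹`. -/
def xiN (V : C) : ∀ n : ℕ, F.obj (pow V n) ⟶ pow (F.obj V) n
  | 0 => η F
  | n + 1 => δ F V (pow V n) ≫ (F.obj V ◁ xiN V n)

end MonoidalFunctorDefs

lemma Amap_eq (V W : C) (f : 𝟙_ C ⟶ V ⊗ W) :
    Amap V W f = (ρ_ _).inv ≫ (tensorLeftHomEquiv (𝟙_ C) V (Vᘁ) W).symm f := rfl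

lemma Ainv_eq (V W : C) (g : Vᘁ ⟶ W) :
    Ainv V W g = (tensorLeftHomEquiv (𝟙_ C) V (Vᘁ) W) ((ρ_ _).hom ≫ g) := by
  simp [Ainv, tensorLeftHomEquiv]; monoidal

lemma Ainv_Amap (V W : C) (f : 𝟙_ C ⟶ V ⊗ W) : Ainv V W (Amap V W f) = f := by
  rw [Ainv_eq, Amap_eq, Iso.hom_inv_id_assoc, Equiv.apply_symm_apply]

lemma Amap_Ainv (V W : C) (g : Vᘁ ⟶ W) : Amap V W (Ainv V W g) = g := by
  rw [Ainv_eq, Amap_eq, Equiv.symm_apply_apply, Iso.inv_hom_id_assoc]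

set_option linter.unusedSectionVars false
section FF
variable (F : C ⥤ D) [F.Monoidal]

lemma mid_inv (X Y Z : C) :
    F.obj X ◁ δ F Y Z ≫ (α_ (F.obj X) (F.obj Y) (F.obj Z)).inv ≫ μ F X Y ▷ F.obj Z =
      μ F X (Y ⊗ Z) ≫ F.map (α_ X Y Z).inv ≫ δ F (X ⊗ Y) Z := by
  rw [Functor.Monoidal.map_associator_inv]
  simp only [Functor.Monoidal.μ_δ_assoc, Category.assoc, Functor.Monoidal.μ_δ, Category.comp_id]

lemma mid_hom (X Y Z : C) :
    δ F X Y ▷ F.obj Z ≫ (α_ (F.obj X) (F.obj Y) (F.obj Z)).hom ≫ F.obj X ◁ μ F Y Z =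
      μ F (X ⊗ Y) Z ≫ F.map (α_ X Y Z).hom ≫ δ F X (Y ⊗ Z) := by
  rw [Functor.Monoidal.map_associator]
  simp only [Functor.Monoidal.μ_δ_assoc, Category.assoc, Functor.Monoidal.μ_δ, Category.comp_id]

lemma FP_cv (X : C) :
    F.obj (Xᘁ) ◁ dbF F X ≫ (α_ _ _ _).inv ≫ evF F X ▷ F.obj (Xᘁ) =
      (ρ_ (F.obj (Xᘁ))).hom ≫ (λ_ (F.obj (Xᘁ))).inv := by
  dsimp only [dbF, evF]
  simp only [MonoidalCategory.whiskerLeft_comp, comp_whiskerRight, Category.assoc]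
  slice_lhs 3 5 => rw [mid_inv]
  slice_lhs 2 3 => rw [Functor.LaxMonoidal.μ_natural_right]
  slice_lhs 5 6 => rw [Functor.OplaxMonoidal.δ_natural_left]
  slice_lhs 3 5 => rw [← F.map_comp, ← F.map_comp,
    ExactPairing.coevaluation_evaluation]
  rw [F.map_comp]
  slice_lhs 1 3 => rw [← Functor.LaxMonoidal.right_unitality]
  slice_lhs 2 4 => rw [← Functor.OplaxMonoidal.left_unitality]

lemma FP_ec (X : C) :
    dbF F X ▷ F.obj X ≫ (α_ _ _ _).hom ≫ F.obj X ◁ evF F X =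
      (λ_ (F.obj X)).hom ≫ (ρ_ (F.obj X)).inv := by
  dsimp only [dbF, evF]
  simp only [MonoidalCategory.whiskerLeft_comp, comp_whiskerRight, Category.assoc]
  slice_lhs 3 5 => rw [mid_hom]
  slice_lhs 2 3 => rw [Functor.LaxMonoidal.μ_natural_left]
  slice_lhs 5 6 => rw [Functor.OplaxMonoidal.δ_natural_right]
  slice_lhs 3 5 => rw [← F.map_comp, ← F.map_comp,
    ExactPairing.evaluation_coevaluation]
  rw [F.map_comp]
  slice_lhs 1 3 => rw [← Functor.LaxMonoidal.left_unitality]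
  slice_lhs 2 4 => rw [← Functor.OplaxMonoidal.right_unitality]

/-- The transported exact pairing on `(F X, F (Xᘁ))`. -/
abbrev FP (X : C) : ExactPairing (F.obj X) (F.obj (Xᘁ)) where
  coevaluation' := dbF F X
  evaluation' := evF F X
  coevaluation_evaluation' := FP_cv F X
  evaluation_coevaluation' := FP_ec F X

/-- `F.obj (Xᘁ)` as a right dual of `F.obj X`. -/
abbrev FRD (X : C) : HasRightDual (F.obj X) := @HasRightDual.mk D _ _ (F.obj X) (F.obj (Xᘁ)) (FP F X)

end FF

section FG
variable (F : C ⥤ D) [F.Monoidal]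

lemma xiT_eq (X : C) :
    xiT F X = @rightAdjointMate D _ _ (F.obj X) (F.obj X) inferInstance (FRD F X)
      (𝟙 (F.obj X)) := by
  dsimp only [rightAdjointMate, xiT, FRD, ExactPairing.evaluation, ExactPairing.coevaluation, FP]
  simp only [id_whiskerRight, MonoidalCategory.whiskerLeft_id, Category.id_comp]
  rfl

lemma xiTinv_eq (X : C) :
    xiTinv F X = @rightAdjointMate D _ _ (F.obj X) (F.obj X) (FRD F X) inferInstance
      (𝟙 (F.obj X)) := by
  dsimp only [rightAdjointMate, xiTinv, FRD, ExactPairing.evaluation,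
    ExactPairing.coevaluation, FP, dbF]
  simp only [id_whiskerRight, MonoidalCategory.whiskerLeft_id, Category.id_comp]
  rfl

lemma xiT_xiTinv (X : C) : xiT F X ≫ xiTinv F X = 𝟙 (F.obj (Xᘁ)) := by
  rw [xiT_eq, xiTinv_eq,
    ← @comp_rightAdjointMate D _ _ (F.obj X) (F.obj X) (F.obj X) (FRD F X) inferInstance
      (FRD F X) (𝟙 _) (𝟙 _), Category.comp_id, @rightAdjointMate_id D _ _ _ (FRD F X)]
  rfl

lemma xiTinv_xiT (X : C) : xiTinv F X ≫ xiT F X = 𝟙 ((F.obj X)ᘁ) := by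
  rw [xiT_eq, xiTinv_eq,
    ← @comp_rightAdjointMate D _ _ (F.obj X) (F.obj X) (F.obj X) inferInstance (FRD F X)
      inferInstance (𝟙 _) (𝟙 _), Category.comp_id, rightAdjointMate_id]

lemma map_mate {X Y : C} (g : X ⟶ Y) :
    @rightAdjointMate D _ _ (F.obj X) (F.obj Y) (FRD F X) (FRD F Y) (F.map g) = F.map (gᘁ) := by
  dsimp only [rightAdjointMate, FRD, ExactPairing.evaluation, ExactPairing.coevaluation, FP,
    dbF, evF]
  show (ρ_ (F.obj (Yᘁ))).inv ≫ (F.obj (Yᘁ) ◁ dbF F X) ≫ (F.obj (Yᘁ) ◁ F.map g ▷ F.obj (Xᘁ)) ≫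
      (α_ _ _ _).inv ≫ (evF F Y ▷ F.obj (Xᘁ)) ≫ (λ_ _).hom =
    F.map ((ρ_ (Yᘁ)).inv ≫ (Yᘁ ◁ η_ X (Xᘁ)) ≫ (Yᘁ ◁ g ▷ Xᘁ) ≫ (α_ _ _ _).inv ≫
      (ε_ Y (Yᘁ) ▷ Xᘁ) ≫ (λ_ _).hom)
  dsimp only [dbF, evF]
  simp only [MonoidalCategory.whiskerLeft_comp, comp_whiskerRight, Category.assoc]
  slice_lhs 4 5 => rw [← MonoidalCategory.whiskerLeft_comp,
    Functor.OplaxMonoidal.δ_natural_left, MonoidalCategory.whiskerLeft_comp]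
  slice_lhs 5 7 => rw [mid_inv]
  slice_lhs 3 4 => rw [← MonoidalCategory.whiskerLeft_comp, ← F.map_comp]
  slice_lhs 3 4 => rw [Functor.LaxMonoidal.μ_natural_right]
  slice_lhs 6 7 => rw [Functor.OplaxMonoidal.δ_natural_left]
  slice_lhs 1 3 => rw [Functor.LaxMonoidal.right_unitality_inv]
  slice_lhs 5 7 => rw [Functor.OplaxMonoidal.left_unitality_hom]
  simp only [MonoidalCategory.whiskerLeft_comp, Category.assoc, ← F.map_comp]

lemma xiT_natural {X Y : C} (g : X ⟶ Y) :
    F.map (gᘁ) ≫ xiT F X = xiT F Y ≫ (F.map g)ᘁ := by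
  rw [xiT_eq, xiT_eq, ← map_mate,
    ← @comp_rightAdjointMate D _ _ (F.obj X) (F.obj X) (F.obj Y) inferInstance (FRD F X)
      (FRD F Y) (𝟙 _) (F.map g),
    ← @comp_rightAdjointMate D _ _ (F.obj X) (F.obj Y) (F.obj Y) inferInstance inferInstance
      (FRD F Y) (F.map g) (𝟙 _), Category.id_comp, Category.comp_id]

end FG

section FH
variable (F : C ⥤ D) [F.Monoidal]

lemma coev_whiskerLeft_xiTinv (X : C) :
    Ainv (F.obj X) (F.obj (Xᘁ)) (xiTinv F X) = dbF F X :=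
  Ainv_Amap (F.obj X) (F.obj (Xᘁ)) (dbF F X)

lemma Ainv_xiTinv (X : C) {Y : C} (k : Xᘁ ⟶ Y) :
    Ainv (F.obj X) (F.obj Y) (xiTinv F X ≫ F.map k) =
      ε F ≫ F.map (Ainv X Y k) ≫ δ F X Y := by
  have h := coev_whiskerLeft_xiTinv F X
  dsimp only [Ainv] at h ⊢
  rw [MonoidalCategory.whiskerLeft_comp, ← Category.assoc, h]
  dsimp only [dbF]
  rw [Category.assoc, Category.assoc, Functor.OplaxMonoidal.δ_natural_right,
    ← F.map_comp_assoc]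

lemma Amap_F (X Y : C) (f : 𝟙_ C ⟶ X ⊗ Y) :
    Amap (F.obj X) (F.obj Y) (ε F ≫ F.map f ≫ δ F X Y) =
      xiTinv F X ≫ F.map (Amap X Y f) := by
  have h := Ainv_xiTinv F X (Amap X Y f)
  rw [Ainv_Amap] at h
  rw [← h, Amap_Ainv]

lemma xiTinv_natural {X Y : C} (g : X ⟶ Y) :
    (F.map g)ᘁ ≫ xiTinv F X = xiTinv F Y ≫ F.map (gᘁ) := by
  calc (F.map g)ᘁ ≫ xiTinv F X
      = xiTinv F Y ≫ (xiT F Y ≫ (F.map g)ᘁ) ≫ xiTinv F X := by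
        rw [← Category.assoc, ← Category.assoc, xiTinv_xiT, Category.id_comp]
    _ = xiTinv F Y ≫ F.map (gᘁ) ≫ xiT F X ≫ xiTinv F X := by
        rw [← xiT_natural]; simp only [Category.assoc]
    _ = xiTinv F Y ≫ F.map (gᘁ) := by rw [xiT_xiTinv, Category.comp_id]

lemma mate_xiTinv_j (P : Pivotal C) (Q : Pivotal D) (hF : PreservesPivotal F P Q) (V : C) :
    (xiTinv F V)ᘁ ≫ (Q.j (F.obj V)).inv = xiTinv F (Vᘁ) ≫ F.map (P.j V).inv := by
  have h2 : (xiT F V)ᘁ ≫ (xiTinv F V)ᘁ = 𝟙 _ := by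
    rw [← comp_rightAdjointMate, xiTinv_xiT, rightAdjointMate_id]
  have h2' : (xiTinv F V)ᘁ ≫ (xiT F V)ᘁ = 𝟙 _ := by
    rw [← comp_rightAdjointMate, xiT_xiTinv, rightAdjointMate_id]
  haveI : IsIso (xiT F (Vᘁ)) := ⟨xiTinv F (Vᘁ), xiT_xiTinv F (Vᘁ), xiTinv_xiT F (Vᘁ)⟩
  haveI : IsIso ((xiT F V)ᘁ) := ⟨(xiTinv F V)ᘁ, h2, h2'⟩
  rw [← cancel_epi (xiT F (Vᘁ)), ← cancel_mono ((Q.j (F.obj V)).hom),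
    ← cancel_mono ((xiT F V)ᘁ)]
  simp only [Category.assoc, Iso.inv_hom_id_assoc, ← hF V,
    reassoc_of% (xiT_xiTinv F (Vᘁ)), reassoc_of% h2', ← F.map_comp_assoc,
    Iso.inv_hom_id, F.map_id, Category.id_comp, Category.comp_id]
  rw [h2', Category.comp_id]

lemma stmt1 (P : Pivotal C) (Q : Pivotal D) (hF : PreservesPivotal F P Q)
    (V W : C) (f : 𝟙_ C ⟶ V ⊗ W) :
    Emap (F.obj W) (Q.j (F.obj V)) (ε F ≫ F.map f ≫ δ F V W)
      = ε F ≫ F.map (Emap W (P.j V) f) ≫ δ F W V := by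
  dsimp only [Emap, Tmap]
  rw [Amap_F, comp_rightAdjointMate, Category.assoc, mate_xiTinv_j F P Q hF V,
    reassoc_of% (xiTinv_natural F (Amap V W f)), ← F.map_comp, Ainv_xiTinv]

end FH

lemma Amap_nat (V : C) {W W' : C} (f : 𝟙_ C ⟶ V ⊗ W) (h : W ⟶ W') :
    Amap V W' (f ≫ (V ◁ h)) = Amap V W f ≫ h := by
  have e := tensorLeftHomEquiv_naturality (Y := V) ((tensorLeftHomEquiv (𝟙_ C) V (Vᘁ) W).symm f) h
  rw [Equiv.apply_symm_apply] at e
  rw [Amap_eq, Amap_eq, ← e, Equiv.symm_apply_apply, Category.assoc]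

lemma Ainv_mate {W W' V : C} (h : W ⟶ W') (m : Wᘁ ⟶ V) :
    Ainv W' V (hᘁ ≫ m) = Ainv W V m ≫ (h ▷ V) := by
  dsimp only [Ainv]
  rw [MonoidalCategory.whiskerLeft_comp, ← Category.assoc,
    coevaluation_comp_rightAdjointMate, Category.assoc, ← whisker_exchange]
  simp only [Category.assoc]

lemma Emap_nat {V W W' : C} (jV : V ≅ (Vᘁ)ᘁ) (f : 𝟙_ C ⟶ V ⊗ W) (h : W ⟶ W') :
    Emap W' jV (f ≫ (V ◁ h)) = Emap W jV f ≫ (h ▷ V) := by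
  dsimp only [Emap, Tmap]
  rw [Amap_nat, comp_rightAdjointMate, Category.assoc, ← Ainv_mate]

section FI
variable (F : C ⥤ D) [F.Monoidal]

lemma xiN_coh (V : C) (n : ℕ) :
    δ F (pow V n) V ≫ (xiN F V n ▷ F.obj V) ≫ PhiN (F.obj V) n =
      F.map (PhiN V n) ≫ xiN F V (n + 1) := by
  induction n with
  | zero =>
    dsimp only [PhiN, xiN, pow]
    rw [F.map_comp]
    slice_lhs 1 3 => rw [Functor.OplaxMonoidal.left_unitality_hom]
    simp only [Category.assoc]
    rw [← Functor.OplaxMonoidal.right_unitality]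
  | succ n ih =>
    dsimp only [PhiN, xiN, pow]
    simp only [comp_whiskerRight, Category.assoc]
    slice_lhs 3 4 => rw [associator_naturality_middle]
    slice_lhs 1 3 => rw [Functor.OplaxMonoidal.associativity]
    slice_lhs 3 5 => erw [← MonoidalCategory.whiskerLeft_comp,
      ← MonoidalCategory.whiskerLeft_comp, ih,
      MonoidalCategory.whiskerLeft_comp]
    slice_lhs 2 3 => rw [Functor.OplaxMonoidal.δ_natural_right]
    dsimp only [xiN, pow]
    simp only [F.map_comp, MonoidalCategory.whiskerLeft_comp, Category.assoc]

lemma stmt2 (P : Pivotal C) (Q : Pivotal D) (hF : PreservesPivotal F P Q)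
    (V : C) (n : ℕ) (g : 𝟙_ C ⟶ pow V (n + 1)) :
    EN Q.j (F.obj V) n (ε F ≫ F.map g ≫ xiN F V (n + 1))
      = ε F ≫ F.map (EN P.j V n g) ≫ xiN F V (n + 1) := by
  dsimp only [EN]
  have e : ε F ≫ F.map g ≫ xiN F V (n + 1) =
      (ε F ≫ F.map g ≫ δ F V (pow V n)) ≫ (F.obj V ◁ xiN F V n) := by
    dsimp only [xiN]
    exact ((Category.assoc (ε F) (F.map g ≫ δ F V (pow V n)) (F.obj V ◁ xiN F V n)).trans
      (congrArg (ε F ≫ ·) (Category.assoc _ _ _))).symm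
  rw [e, Emap_nat]
  erw [stmt1 F P Q hF V (pow V n) g]
  simp only [Category.assoc]
  rw [xiN_coh]
  dsimp only [xiN]
  rw [F.map_comp]
  simp only [Category.assoc]

end FI

/-- A monoidal functor between pivotal monoidal categories preserving the
pivotal structures intertwines `E_{V,W}` and `E_V^(n)` (via the coherence isomorphisms
`ξ⁻¹` resp. `ξ^(n)`). -/
theorem statement5 (F : C ⥤ D) [F.Monoidal] (P : Pivotal C) (Q : Pivotal D)
    (hF : PreservesPivotal F P Q) :
    (∀ (V W : C) (f : 𝟙_ C ⟶ V ⊗ W),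
      Emap (F.obj W) (Q.j (F.obj V)) (ε F ≫ F.map f ≫ δ F V W)
        = ε F ≫ F.map (Emap W (P.j V) f) ≫ δ F W V) ∧
    (∀ (V : C) (n : ℕ) (g : 𝟙_ C ⟶ pow V (n + 1)),
      EN Q.j (F.obj V) n (ε F ≫ F.map g ≫ xiN F V (n + 1))
        = ε F ≫ F.map (EN P.j V n g) ≫ xiN F V (n + 1)) :=
  ⟨stmt1 F P Q hF, stmt2 F P Q hF⟩

end FSI
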